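/- Let s, ℓ, c₇ > 0 be real numbers. In the exterior algebra Λ•(ℝ⁷) with standard basis e₁,…,e₇, define ω = √(sℓ)(e₁∧e₄ + e₂∧e₅ − e₃∧e₆) and Ω₊ = s^{3/2} e₁∧e₂∧e₃ + ℓ√s (e₁∧e₅∧e₆ − e₂∧e₄∧e₆ − e₃∧e₄∧e₅), and set φ³ = √c₇ e₇∧ω + Ω₊. Then there exists a basis u₁,…,u₇ of ℝ⁷ such that φ³ = u₁∧u₂∧u₃ − u₁∧u₄∧u₅ − u₁∧u₆∧u₇ − u₂∧u₄∧u₆ + u₂∧u₅∧u₇ − u₃∧u₄∧u₇ − u₃∧u₅∧u₆; that is, φ³ is a 3-vector of G₂-type. -/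

import Mathlib

/-- The generator of `Λ•(ℝ⁷)` corresponding to the `i`-th standard basis vector. -/
noncomputable def e7 (i : Fin 7) : ExteriorAlgebra ℝ (Fin 7 → ℝ) :=
  ExteriorAlgebra.ι ℝ (Pi.single i 1)

/-- The standard associative 3-form `φ₀` evaluated on a family `u₁, …, u₇` (indexed by
`0, …, 6`):
`u₁∧u₂∧u₃ − u₁∧u₄∧u₅ − u₁∧u₆∧u₇ − u₂∧u₄∧u₆ + u₂∧u₅∧u₇ − u₃∧u₄∧u₇ − u₃∧u₅∧u₆`. -/
noncomputable def g2Form (u : Fin 7 → (Fin 7 → ℝ)) : ExteriorAlgebra ℝ (Fin 7 → ℝ) :=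
  let w : Fin 7 → ExteriorAlgebra ℝ (Fin 7 → ℝ) := fun i => ExteriorAlgebra.ι ℝ (u i)
  w 0 * w 1 * w 2 - w 0 * w 3 * w 4 - w 0 * w 5 * w 6 - w 1 * w 3 * w 5
    + w 1 * w 4 * w 6 - w 2 * w 3 * w 6 - w 2 * w 4 * w 5

lemma e7_swap (i j : Fin 7) (h : j < i) : e7 i * e7 j = -(e7 j * e7 i) := by
  have := ExteriorAlgebra.ι_add_mul_swap (R := ℝ) (Pi.single i 1 : Fin 7 → ℝ) (Pi.single j 1)
  unfold e7
  exact eq_neg_of_add_eq_zero_left this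

lemma e7_swap' (i j : Fin 7) (x : ExteriorAlgebra ℝ (Fin 7 → ℝ)) (h : j < i) :
    e7 i * (e7 j * x) = -(e7 j * (e7 i * x)) := by
  rw [← mul_assoc, e7_swap i j h, neg_mul, mul_assoc]

/-- with standard basis `e₁, …, e₇` (indexed here by `0, …, 6`), the 3-vector
`φ³ = √c₇ e₇∧ω + Ω₊`, with `ω = √(sℓ)(e₁∧e₄ + e₂∧e₅ − e₃∧e₆)` and
`Ω₊ = s^{3/2} e₁∧e₂∧e₃ + ℓ√s (e₁∧e₅∧e₆ − e₂∧e₄∧e₆ − e₃∧e₄∧e₅)`, is of G₂-type: it equals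
the standard associative 3-form in some basis `u₁, …, u₇` of `ℝ⁷`. -/
theorem statement10 (s ℓ c₇ : ℝ) (hs : 0 < s) (hℓ : 0 < ℓ) (hc₇ : 0 < c₇) :
    ∀ ω Ωp φ : ExteriorAlgebra ℝ (Fin 7 → ℝ),
      ω = Real.sqrt (s * ℓ) • (e7 0 * e7 3 + e7 1 * e7 4 - e7 2 * e7 5) →
      Ωp = Real.sqrt (s ^ 3) • (e7 0 * e7 1 * e7 2)
          + (ℓ * Real.sqrt s) • (e7 0 * e7 4 * e7 5 - e7 1 * e7 3 * e7 5
              - e7 2 * e7 3 * e7 4) →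
      φ = Real.sqrt c₇ • (e7 6 * ω) + Ωp →
      ∃ u : Module.Basis (Fin 7) ℝ (Fin 7 → ℝ), φ = g2Form (fun i => u i) := by
  intro ω Ωp φ hω hΩ hφ
  subst hω hΩ hφ
  set a := Real.sqrt s with hadef
  set b := Real.sqrt ℓ with hbdef
  set c := Real.sqrt c₇ with hcdef
  have ha0 : a ≠ 0 := ne_of_gt (Real.sqrt_pos.2 hs)
  have hb0 : b ≠ 0 := ne_of_gt (Real.sqrt_pos.2 hℓ)
  have hc0 : c ≠ 0 := ne_of_gt (Real.sqrt_pos.2 hc₇)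
  have h1 : Real.sqrt (s * ℓ) = a * b := Real.sqrt_mul hs.le ℓ
  have h2 : Real.sqrt (s ^ 3) = s * a := by
    rw [pow_succ, Real.sqrt_mul (by positivity), Real.sqrt_sq hs.le]
  have hsa : s = a * a := (Real.mul_self_sqrt hs.le).symm
  have hlb : ℓ = b * b := (Real.mul_self_sqrt hℓ.le).symm
  rw [h1, h2, hsa, hlb]
  set w : Fin 7 → ℝˣ := ![Units.mk0 a ha0, Units.mk0 a ha0, Units.mk0 a ha0,
    Units.mk0 b hb0, Units.mk0 (-c) (neg_ne_zero.2 hc0), Units.mk0 b hb0, Units.mk0 b hb0]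
  refine ⟨(((Pi.basisFun ℝ (Fin 7)).reindex (Equiv.swap 4 6)).unitsSMul w), ?_⟩
  have hu : ∀ i : Fin 7,
      ExteriorAlgebra.ι ℝ ((((Pi.basisFun ℝ (Fin 7)).reindex (Equiv.swap 4 6)).unitsSMul w) i)
        = (w i : ℝ) • e7 (Equiv.swap (4:Fin 7) 6 i) := by
    intro i
    rw [Module.Basis.unitsSMul_apply, Units.smul_def, map_smul, Module.Basis.reindex_apply, Equiv.symm_swap,
      Pi.basisFun_apply]
    rfl
  show _ = g2Form _
  unfold g2Form
  simp only [hu]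
  have w0 : ((w 0 : ℝˣ) : ℝ) = a := rfl
  have w1 : ((w 1 : ℝˣ) : ℝ) = a := rfl
  have w2 : ((w 2 : ℝˣ) : ℝ) = a := rfl
  have w3 : ((w 3 : ℝˣ) : ℝ) = b := rfl
  have w4 : ((w 4 : ℝˣ) : ℝ) = -c := rfl
  have w5 : ((w 5 : ℝˣ) : ℝ) = b := rfl
  have w6 : ((w 6 : ℝˣ) : ℝ) = b := rfl
  have s0 : Equiv.swap (4 : Fin 7) 6 0 = 0 := rfl
  have s1 : Equiv.swap (4 : Fin 7) 6 1 = 1 := rfl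
  have s2 : Equiv.swap (4 : Fin 7) 6 2 = 2 := rfl
  have s3 : Equiv.swap (4 : Fin 7) 6 3 = 3 := rfl
  have s4 : Equiv.swap (4 : Fin 7) 6 4 = 6 := rfl
  have s5 : Equiv.swap (4 : Fin 7) 6 5 = 5 := rfl
  have s6 : Equiv.swap (4 : Fin 7) 6 6 = 4 := rfl
  simp only [w0, w1, w2, w3, w4, w5, w6, s0, s1, s2, s3, s4, s5, s6]
  simp only [mul_add, mul_sub, add_mul, sub_mul, neg_mul, smul_mul_assoc, mul_smul_comm, mul_assoc, neg_smul, smul_neg, mul_neg, neg_neg,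
    e7_swap 6 0 (by decide), e7_swap 6 1 (by decide), e7_swap 6 2 (by decide),
    e7_swap 6 3 (by decide), e7_swap 6 4 (by decide), e7_swap 6 5 (by decide),
    e7_swap 5 4 (by decide),
    e7_swap' 6 0 _ (by decide), e7_swap' 6 1 _ (by decide), e7_swap' 6 2 _ (by decide),
    e7_swap' 6 3 _ (by decide), e7_swap' 6 4 _ (by decide), e7_swap' 6 5 _ (by decide),
    e7_swap' 5 4 _ (by decide)]
  module
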